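/- arXiv:1603.06254 — 2 statements merged into one kernel-verified Lean document; each statement's English description precedes it below -/
import Mathlib

section
/- Let Ṽ, W̃ be n×r real matrices with W̃ᵀ Ṽ invertible, and let R_B, R_C be n×r matrices satisfying the Petrov–Galerkin orthogonality conditions W̃ᵀ R_B = 0 and Ṽᵀ R_C = 0. Define F = R_B (W̃ᵀ Ṽ)⁻¹ W̃ᵀ + Ṽ (W̃ᵀ Ṽ)⁻¹ R_Cᵀ. Then F Ṽ = R_B and W̃ᵀ F = R_Cᵀ. -/
open Matrix Kronecker

/-- Frobenius norm of a real matrix. -/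
noncomputable def frob {m n : Type*} [Fintype m] [Fintype n] (M : Matrix m n ℝ) : ℝ :=
  Real.sqrt (∑ i, ∑ j, (M i j)^2)

/-- Operator 2-norm of a real matrix. -/
noncomputable def op2 {m n : Type*} [Fintype m] [Fintype n] [DecidableEq n]
    (M : Matrix m n ℝ) : ℝ :=
  ‖LinearMap.toContinuousLinearMap (Matrix.toEuclideanLin M)‖

/-- Euclidean norm of a real vector. -/
noncomputable def evec {n : Type*} [Fintype n] (v : n → ℝ) : ℝ :=
  Real.sqrt (∑ i, (v i)^2)

/-- Vectorization of a matrix (stacking columns), indexed so that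
`(X ⊗ Y) (mvec Z) = mvec (Y * Z * Xᵀ)`. -/
def mvec {m n : Type*} (Z : Matrix m n ℝ) : n × m → ℝ := fun p => Z p.2 p.1

theorem stmt9 {n r : ℕ} (V W RB RC : Matrix (Fin n) (Fin r) ℝ)
    (hinv : IsUnit (Wᵀ * V)) (hB : Wᵀ * RB = 0) (hC : Vᵀ * RC = 0) :
    (RB * (Wᵀ * V)⁻¹ * Wᵀ + V * (Wᵀ * V)⁻¹ * RCᵀ) * V = RB ∧
    Wᵀ * (RB * (Wᵀ * V)⁻¹ * Wᵀ + V * (Wᵀ * V)⁻¹ * RCᵀ) = RCᵀ := by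
  have h1 : (Wᵀ * V)⁻¹ * (Wᵀ * V) = 1 := nonsing_inv_mul _ (isUnit_iff_isUnit_det _ |>.mp hinv)
  have h2 : (Wᵀ * V) * (Wᵀ * V)⁻¹ = 1 := mul_nonsing_inv _ (isUnit_iff_isUnit_det _ |>.mp hinv)
  have hCV : RCᵀ * V = 0 := by
    have := congrArg Matrix.transpose hC
    simpa [Matrix.transpose_mul] using this
  constructor
  · calc (RB * (Wᵀ * V)⁻¹ * Wᵀ + V * (Wᵀ * V)⁻¹ * RCᵀ) * V
        = RB * ((Wᵀ * V)⁻¹ * (Wᵀ * V)) + V * (Wᵀ * V)⁻¹ * (RCᵀ * V) := by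
          simp [Matrix.add_mul, Matrix.mul_add, Matrix.mul_assoc]
      _ = RB := by rw [h1, hCV]; simp
  · calc Wᵀ * (RB * (Wᵀ * V)⁻¹ * Wᵀ + V * (Wᵀ * V)⁻¹ * RCᵀ)
        = (Wᵀ * RB) * ((Wᵀ * V)⁻¹ * Wᵀ) + ((Wᵀ * V) * (Wᵀ * V)⁻¹) * RCᵀ := by
          simp [Matrix.add_mul, Matrix.mul_add, Matrix.mul_assoc]
      _ = RCᵀ := by rw [hB, h2]; simp
end

section
/- Let Ṽ, W̃ be n×r real matrices with W̃ᵀ Ṽ invertible, and R_B = [R_{B₁}, …, R_{B_r}], R_C = [R_{C₁}, …, R_{C_r}] be n×r matrices (columns R_{B_i}, R_{C_i}). Define F = R_B (W̃ᵀ Ṽ)⁻¹ W̃ᵀ + Ṽ (W̃ᵀ Ṽ)⁻¹ R_Cᵀ. Then ‖F‖₂ ≤ ‖F‖_F ≤ √r · ( max_i ‖R_{B_i}‖₂ · ‖(W̃ᵀ Ṽ)⁻¹ W̃ᵀ‖₂ + max_i ‖R_{C_i}‖₂ · ‖Ṽ (W̃ᵀ Ṽ)⁻¹‖₂ ). -/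
open Matrix Kronecker

section helpers

open scoped Matrix.Norms.L2Operator

variable {m n k : Type*} [Fintype m] [Fintype n] [Fintype k]

lemma evec_nonneg (v : n → ℝ) : 0 ≤ evec v := Real.sqrt_nonneg _

lemma frob_nonneg (M : Matrix m n ℝ) : 0 ≤ frob M := Real.sqrt_nonneg _

lemma op2_nonneg [DecidableEq n] (M : Matrix m n ℝ) : 0 ≤ op2 M := norm_nonneg _

lemma sq_evec (v : n → ℝ) : evec v ^ 2 = ∑ i, (v i)^2 :=
  Real.sq_sqrt (by positivity)

lemma sq_frob (M : Matrix m n ℝ) : frob M ^ 2 = ∑ i, ∑ j, (M i j)^2 :=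
  Real.sq_sqrt (by positivity)

lemma sqrt_le_of_sq_le {a b : ℝ} (hb : 0 ≤ b) (h : a ≤ b^2) : Real.sqrt a ≤ b := by
  rw [← Real.sqrt_sq hb]
  exact Real.sqrt_le_sqrt h

lemma evec_eq_norm (v : n → ℝ) : evec v = ‖(WithLp.equiv 2 (n → ℝ)).symm v‖ := by
  rw [EuclideanSpace.norm_eq]
  simp [evec, Real.norm_eq_abs, sq_abs]

lemma op2_eq_l2norm [DecidableEq n] (M : Matrix m n ℝ) : op2 M = ‖M‖ := rfl

lemma op2_transpose [DecidableEq m] [DecidableEq n] (M : Matrix m n ℝ) :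
    op2 Mᵀ = op2 M := by
  rw [op2_eq_l2norm, op2_eq_l2norm, ← Matrix.l2_opNorm_conjTranspose M,
    Matrix.conjTranspose_eq_transpose_of_trivial]

lemma evec_mulVec_le [DecidableEq n] (M : Matrix m n ℝ) (x : n → ℝ) :
    evec (M *ᵥ x) ≤ op2 M * evec x := by
  have h := Matrix.l2_opNorm_mulVec M ((WithLp.equiv 2 (n → ℝ)).symm x)
  rw [op2_eq_l2norm, evec_eq_norm, evec_eq_norm]
  exact h

lemma evec_mulVec_le' (M : Matrix m n ℝ) (x : n → ℝ) :
    evec (M *ᵥ x) ≤ frob M * evec x := by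
  apply sqrt_le_of_sq_le (mul_nonneg (frob_nonneg M) (evec_nonneg x))
  rw [mul_pow, sq_frob, sq_evec]
  rw [Finset.sum_mul]
  apply Finset.sum_le_sum
  intro i _
  calc (Matrix.mulVec M x i)^2 = (∑ j, M i j * x j)^2 := by rfl
    _ ≤ (∑ j, (M i j)^2) * ∑ j, (x j)^2 :=
        Finset.sum_mul_sq_le_sq_mul_sq _ _ _

lemma op2_le_frob [DecidableEq n] (M : Matrix m n ℝ) : op2 M ≤ frob M := by
  apply ContinuousLinearMap.opNorm_le_bound _ (frob_nonneg M)
  intro x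
  have hx : x = (WithLp.equiv 2 (n → ℝ)).symm ((WithLp.equiv 2 (n → ℝ)) x) := rfl
  rw [hx]
  show ‖Matrix.toEuclideanLin M ((WithLp.equiv 2 (n → ℝ)).symm _)‖ ≤ _
  rw [show Matrix.toEuclideanLin M ((WithLp.equiv 2 (n → ℝ)).symm ((WithLp.equiv 2 (n → ℝ)) x)) = (WithLp.equiv 2 (m → ℝ)).symm (M *ᵥ (WithLp.equiv 2 (n → ℝ)) x) from rfl, ← evec_eq_norm, ← evec_eq_norm]
  exact evec_mulVec_le' M _

lemma frob_transpose (M : Matrix m n ℝ) : frob Mᵀ = frob M := by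
  unfold frob
  rw [Finset.sum_comm]
  rfl

lemma frob_add_le (A B : Matrix m n ℝ) : frob (A + B) ≤ frob A + frob B := by
  letI := Matrix.frobeniusSeminormedAddCommGroup (α := ℝ) (m := m) (n := n)
  have he : ∀ C : Matrix m n ℝ, frob C = ‖C‖ := by
    intro C
    rw [Matrix.frobenius_norm_def, ← Real.sqrt_eq_rpow, frob]
    congr 1
    refine Finset.sum_congr rfl fun i _ => Finset.sum_congr rfl fun j _ => ?_
    rw [Real.norm_eq_abs, show ((2:ℝ)) = ((2:ℕ):ℝ) by norm_num, Real.rpow_natCast, sq_abs]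
  rw [he, he, he]
  exact norm_add_le A B

lemma frob_mul_le_op2 [DecidableEq k] [DecidableEq n] (X : Matrix m k ℝ) (M : Matrix k n ℝ) :
    frob (X * M) ≤ frob X * op2 M := by
  apply sqrt_le_of_sq_le (mul_nonneg (frob_nonneg X) (op2_nonneg M))
  calc ∑ i, ∑ j, ((X * M) i j)^2
      = ∑ i, evec (Mᵀ *ᵥ (fun t => X i t)) ^ 2 := by
        refine Finset.sum_congr rfl fun i _ => ?_
        rw [sq_evec]
        refine Finset.sum_congr rfl fun j _ => ?_
        simp [Matrix.mul_apply, Matrix.mulVec, dotProduct, Matrix.transpose_apply,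
          mul_comm]
    _ ≤ ∑ i, (op2 Mᵀ * evec (fun t => X i t)) ^ 2 := by
        refine Finset.sum_le_sum fun i _ => ?_
        exact pow_le_pow_left₀ (evec_nonneg _) (evec_mulVec_le Mᵀ _) 2
    _ = (op2 M)^2 * ∑ i, ∑ t, (X i t)^2 := by
        rw [Finset.mul_sum]
        refine Finset.sum_congr rfl fun i _ => ?_
        rw [mul_pow, op2_transpose, sq_evec]
    _ = (frob X * op2 M)^2 := by rw [mul_pow, sq_frob]; ring

lemma frob_le_sqrt_card_mul_sup {r : ℕ} (X : Matrix m (Fin r) ℝ) :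
    frob X ≤ Real.sqrt r * ⨆ i : Fin r, evec (fun j => X j i) := by
  rcases Nat.eq_zero_or_pos r with hr | hr
  · subst hr
    have h1 : frob X = 0 := by simp [frob]
    have h2 : (⨆ i : Fin 0, evec (fun j => X j i)) = 0 := by
      exact Real.iSup_of_isEmpty _
    simp [h1, h2]
  · set s := ⨆ i : Fin r, evec (fun j => X j i) with hs
    haveI : Nonempty (Fin r) := ⟨⟨0, hr⟩⟩
    have hle : ∀ i : Fin r, evec (fun j => X j i) ≤ s := fun i =>
      le_ciSup (f := fun i : Fin r => evec fun j => X j i)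
        (Set.Finite.bddAbove (Set.finite_range _)) i
    have hs0 : 0 ≤ s := le_trans (evec_nonneg _) (hle (Classical.arbitrary _))
    apply sqrt_le_of_sq_le (mul_nonneg (Real.sqrt_nonneg _) hs0)
    rw [mul_pow, Real.sq_sqrt (Nat.cast_nonneg r)]
    rw [Finset.sum_comm]
    calc ∑ j : Fin r, ∑ i, (X i j)^2
        = ∑ j : Fin r, evec (fun i => X i j) ^ 2 := by
          refine Finset.sum_congr rfl fun j _ => by rw [sq_evec]
      _ ≤ ∑ _j : Fin r, s ^ 2 := by
          refine Finset.sum_le_sum fun j _ => ?_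
          exact pow_le_pow_left₀ (evec_nonneg _) (hle j) 2
      _ = (r : ℝ) * s ^ 2 := by simp [Finset.sum_const, nsmul_eq_mul]

end helpers

theorem stmt10 {n r : ℕ} (V W RB RC : Matrix (Fin n) (Fin r) ℝ)
    (hinv : IsUnit (Wᵀ * V)) :
    op2 (RB * (Wᵀ * V)⁻¹ * Wᵀ + V * (Wᵀ * V)⁻¹ * RCᵀ) ≤
      frob (RB * (Wᵀ * V)⁻¹ * Wᵀ + V * (Wᵀ * V)⁻¹ * RCᵀ) ∧
    frob (RB * (Wᵀ * V)⁻¹ * Wᵀ + V * (Wᵀ * V)⁻¹ * RCᵀ) ≤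
      Real.sqrt r * ((⨆ i : Fin r, evec (fun j => RB j i)) * op2 ((Wᵀ * V)⁻¹ * Wᵀ)
        + (⨆ i : Fin r, evec (fun j => RC j i)) * op2 (V * (Wᵀ * V)⁻¹)) := by
  constructor
  · exact op2_le_frob _
  · have h1 : frob (RB * (Wᵀ * V)⁻¹ * Wᵀ) ≤
        (Real.sqrt r * ⨆ i : Fin r, evec (fun j => RB j i)) * op2 ((Wᵀ * V)⁻¹ * Wᵀ) := by
      calc frob (RB * (Wᵀ * V)⁻¹ * Wᵀ) = frob (RB * ((Wᵀ * V)⁻¹ * Wᵀ)) := by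
            rw [Matrix.mul_assoc]
        _ ≤ frob RB * op2 ((Wᵀ * V)⁻¹ * Wᵀ) := frob_mul_le_op2 _ _
        _ ≤ _ := mul_le_mul_of_nonneg_right (frob_le_sqrt_card_mul_sup RB) (op2_nonneg _)
    have h2 : frob (V * (Wᵀ * V)⁻¹ * RCᵀ) ≤
        (Real.sqrt r * ⨆ i : Fin r, evec (fun j => RC j i)) * op2 (V * (Wᵀ * V)⁻¹) := by
      calc frob (V * (Wᵀ * V)⁻¹ * RCᵀ) = frob ((V * (Wᵀ * V)⁻¹ * RCᵀ)ᵀ) :=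
            (frob_transpose _).symm
        _ = frob (RC * (V * (Wᵀ * V)⁻¹)ᵀ) := by rw [Matrix.transpose_mul, Matrix.transpose_transpose]
        _ ≤ frob RC * op2 (V * (Wᵀ * V)⁻¹)ᵀ := frob_mul_le_op2 _ _
        _ = frob RC * op2 (V * (Wᵀ * V)⁻¹) := by rw [op2_transpose]
        _ ≤ _ := mul_le_mul_of_nonneg_right (frob_le_sqrt_card_mul_sup RC) (op2_nonneg _)
    calc frob (RB * (Wᵀ * V)⁻¹ * Wᵀ + V * (Wᵀ * V)⁻¹ * RCᵀ)
        ≤ frob (RB * (Wᵀ * V)⁻¹ * Wᵀ) + frob (V * (Wᵀ * V)⁻¹ * RCᵀ) := frob_add_le _ _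
      _ ≤ _ := by
          rw [mul_add]
          apply add_le_add
          · calc _ ≤ _ := h1
              _ = Real.sqrt r * ((⨆ i : Fin r, evec fun j => RB j i) * op2 ((Wᵀ * V)⁻¹ * Wᵀ)) := by ring
          · calc _ ≤ _ := h2
              _ = Real.sqrt r * ((⨆ i : Fin r, evec fun j => RC j i) * op2 (V * (Wᵀ * V)⁻¹)) := by ring
end
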